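/- For each a ∈ (0,1), let x^{*,a} be the unique minimizer of L^(a) over X and let ν^{*,a} be the unique vector in its product-form representation. Then, as a → 0+, the Euclidean distance d(x^{*,a}, X*) → 0 and the Euclidean distance d(ν^{*,a}, H*) → 0. -/

import Mathlib

open Finset Filter

/-- The feasible set `X`. -/
def XsetDef {I : Type*} [Fintype I] [DecidableEq I]
    (Kbar : Finset (I → ℕ)) (ρ : I → ℝ) : Set ((I → ℕ) → ℝ) :=
  {x | (∀ k ∈ Kbar.erase 0, 0 ≤ x k) ∧ ∀ i : I, ∑ k ∈ Kbar.erase 0, (k i : ℝ) * x k = ρ i}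

/-- The set `X*` of optimal solutions of (LP). -/
def XstarDef {I : Type*} [Fintype I] [DecidableEq I]
    (Kbar : Finset (I → ℕ)) (ρ : I → ℝ) : Set ((I → ℕ) → ℝ) :=
  {x ∈ XsetDef Kbar ρ |
    ∀ y ∈ XsetDef Kbar ρ, ∑ k ∈ Kbar.erase 0, x k ≤ ∑ k ∈ Kbar.erase 0, y k}

/-- The set `H*` of optimal dual vectors. -/
def HstarDef {I : Type*} [Fintype I] [DecidableEq I]
    (Kbar : Finset (I → ℕ)) (ρ : I → ℝ) : Set (I → ℝ) :=
  {η | (∀ i, 0 ≤ η i) ∧ (∀ k ∈ Kbar.erase 0, ∑ i, (k i : ℝ) * η i ≤ 1) ∧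
    ∃ x ∈ XsetDef Kbar ρ, ∀ k ∈ Kbar.erase 0, ∑ i, (k i : ℝ) * η i < 1 → x k = 0}

/-- `c_k = ∏_i (k_i)!`. -/
noncomputable def confC {I : Type*} [Fintype I] (k : I → ℕ) : ℝ :=
  ∏ i, (Nat.factorial (k i) : ℝ)

/-- The Lyapunov function `L^(a)`. -/
noncomputable def Lfun {I : Type*} [Fintype I] [DecidableEq I]
    (Kbar : Finset (I → ℕ)) (a : ℝ) (x : (I → ℕ) → ℝ) : ℝ :=
  -(1 / Real.log a) *
    ∑ k ∈ Kbar.erase 0, x k * Real.log (x k * confC k / (Real.exp 1 * a))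


section aux
variable {I : Type*} [Fintype I] [DecidableEq I]

lemma one_le_confC (k : I → ℕ) : 1 ≤ confC k := by
  unfold confC
  rw [← Nat.cast_prod]
  exact_mod_cast Finset.one_le_prod' fun i _ => Nat.one_le_iff_ne_zero.mpr (Nat.factorial_ne_zero _)

lemma confC_pos (k : I → ℕ) : 0 < confC k := lt_of_lt_of_le one_pos (one_le_confC k)

lemma sum_single_mul (i : I) (v : I → ℝ) :
    ∑ j, ((Pi.single i 1 : I → ℕ) j : ℝ) * v j = v i := by
  rw [Finset.sum_eq_single i]
  · simp
  · intro j _ hj; simp [Pi.single_eq_of_ne hj]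
  · intro h; exact absurd (Finset.mem_univ i) h

lemma x_le_sum_rho {Kbar : Finset (I → ℕ)} {ρ : I → ℝ} (hρ : ∀ i, 0 < ρ i)
    {x : (I → ℕ) → ℝ} (hx : x ∈ XsetDef Kbar ρ) {k : I → ℕ} (hk : k ∈ Kbar.erase 0) :
    x k ≤ ∑ i, ρ i := by
  have hkne : k ≠ 0 := Finset.ne_of_mem_erase hk
  obtain ⟨i, hi⟩ : ∃ i, k i ≠ 0 := by
    by_contra h; push_neg at h; exact hkne (funext fun i => h i)
  have h1 : x k ≤ (k i : ℝ) * x k := by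
    have : (1 : ℝ) ≤ (k i : ℝ) := by exact_mod_cast Nat.one_le_iff_ne_zero.mpr hi
    nlinarith [hx.1 k hk]
  have h2 : (k i : ℝ) * x k ≤ ∑ k' ∈ Kbar.erase 0, (k' i : ℝ) * x k' :=
    Finset.single_le_sum (f := fun k' => (k' i : ℝ) * x k')
      (fun k' hk' => mul_nonneg (Nat.cast_nonneg _) (hx.1 k' hk')) hk
  have h3 : ρ i ≤ ∑ j, ρ j :=
    Finset.single_le_sum (fun j _ => (hρ j).le) (Finset.mem_univ i)
  exact (h1.trans (h2.trans_eq (hx.2 i))).trans h3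

lemma neg_one_le_mul_log {t c : ℝ} (ht : 0 ≤ t) (hc : 1 ≤ c) :
    -1 ≤ t * Real.log (t * c) := by
  rcases eq_or_lt_of_le ht with h | h
  · simp [← h]
  · have htc : 0 < t * c := mul_pos h (lt_of_lt_of_le one_pos hc)
    have hlog := Real.one_sub_inv_le_log_of_pos htc
    have h1 : t * (1 - (t * c)⁻¹) ≤ t * Real.log (t * c) :=
      mul_le_mul_of_nonneg_left hlog ht
    have h2 : t * (1 - (t * c)⁻¹) = t - c⁻¹ := by
      field_simp
    have h3 : c⁻¹ ≤ 1 := inv_le_one_of_one_le₀ hc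
    nlinarith
  
lemma Lfun_split (Kbar : Finset (I → ℕ)) {a : ℝ} (ha : a ∈ Set.Ioo (0:ℝ) 1)
    (x : (I → ℕ) → ℝ) (hx : ∀ k ∈ Kbar.erase 0, 0 ≤ x k) :
    Lfun Kbar a x = (∑ k ∈ Kbar.erase 0, x k)
      + (∑ k ∈ Kbar.erase 0, (x k * Real.log (x k * confC k) - x k)) / (-Real.log a) := by
  have hla : Real.log a < 0 := Real.log_neg ha.1 ha.2
  have hterm : ∀ k ∈ Kbar.erase 0,
      x k * Real.log (x k * confC k / (Real.exp 1 * a))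
        = x k * Real.log (x k * confC k) - x k * (1 + Real.log a) := by
    intro k hk
    rcases eq_or_lt_of_le (hx k hk) with h | h
    · simp [← h]
    · have hxc : x k * confC k ≠ 0 := (mul_pos h (confC_pos k)).ne'
      have hea : Real.exp 1 * a ≠ 0 := (mul_pos (Real.exp_pos 1) ha.1).ne'
      rw [Real.log_div hxc hea, Real.log_mul (Real.exp_pos 1).ne' ha.1.ne', Real.log_exp]
      ring
  have hmul : ∑ k ∈ Kbar.erase 0, x k * (1 + Real.log a)
      = (1 + Real.log a) * ∑ k ∈ Kbar.erase 0, x k := by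
    rw [Finset.mul_sum]; exact Finset.sum_congr rfl fun k _ => mul_comm _ _
  have key : ∀ S0 S1 : ℝ, -(1 / Real.log a) * (S1 - (1 + Real.log a) * S0)
      = S0 + (S1 - S0) / (-Real.log a) := by
    intro S0 S1
    have ht : Real.log a ≠ 0 := hla.ne
    field_simp
    ring
  rw [Lfun, Finset.sum_congr rfl hterm, Finset.sum_sub_distrib, hmul,
    Finset.sum_sub_distrib, key]

end aux

section mainseq
variable {I : Type*} [Fintype I] [DecidableEq I]

lemma main_seq [Nonempty I]
    (Kbar : Finset (I → ℕ))
    (h0 : (0 : I → ℕ) ∈ Kbar)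
    (hunit : ∀ i : I, Pi.single i 1 ∈ Kbar)
    (hmono : ∀ k ∈ Kbar, ∀ k' : I → ℕ, (∀ i, k' i ≤ k i) → k' ∈ Kbar)
    (ρ : I → ℝ) (hρ : ∀ i, 0 < ρ i)
    (xs : ℝ → (I → ℕ) → ℝ) (νs : ℝ → I → ℝ)
    (hmin : ∀ a ∈ Set.Ioo (0 : ℝ) 1, xs a ∈ XsetDef Kbar ρ ∧
      ∀ y ∈ XsetDef Kbar ρ, Lfun Kbar a (xs a) ≤ Lfun Kbar a y)
    (hprod : ∀ a ∈ Set.Ioo (0 : ℝ) 1, ∀ k ∈ Kbar.erase 0,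
      xs a k = (a / confC k) * Real.exp ((-Real.log a) * ∑ i, (k i : ℝ) * νs a i))
    (A : ℕ → ℝ) (hA0 : ∀ n, 0 < A n) (hAe : ∀ n, A n ≤ Real.exp (-1))
    (hAlim : Filter.Tendsto A Filter.atTop (nhds 0)) :
    ∃ φ : ℕ → ℕ, StrictMono φ ∧
      ∃ xb ∈ XstarDef Kbar ρ, ∃ η ∈ HstarDef Kbar ρ,
        Filter.Tendsto (fun n => Real.sqrt (∑ k ∈ Kbar.erase 0, (xs (A (φ n)) k - xb k) ^ 2))
          Filter.atTop (nhds 0) ∧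
        Filter.Tendsto (fun n => Real.sqrt (∑ i, (νs (A (φ n)) i - η i) ^ 2))
          Filter.atTop (nhds 0) := by
  classical
  have hexpneg1 : Real.exp (-1) < 1 := by
    rw [show (1:ℝ) = Real.exp 0 by rw [Real.exp_zero]]
    exact Real.exp_lt_exp.mpr (by norm_num)
  have hA1 : ∀ n, A n ∈ Set.Ioo (0:ℝ) 1 := fun n => ⟨hA0 n, lt_of_le_of_lt (hAe n) hexpneg1⟩
  set b : ℕ → ℝ := fun n => -Real.log (A n) with hbdef
  have hbpos : ∀ n, 0 < b n := fun n => neg_pos.mpr (Real.log_neg (hA1 n).1 (hA1 n).2)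
  have hb1 : ∀ n, 1 ≤ b n := by
    intro n
    have := Real.log_le_log (hA0 n) (hAe n)
    rw [Real.log_exp] at this
    simp only [hbdef]; linarith
  have hbtop : Filter.Tendsto b Filter.atTop Filter.atTop := by
    have h1 : Filter.Tendsto A Filter.atTop (nhdsWithin 0 (Set.Ioi 0)) :=
      tendsto_nhdsWithin_iff.mpr ⟨hAlim, Filter.Eventually.of_forall hA0⟩
    exact tendsto_neg_atBot_atTop.comp (Real.tendsto_log_nhdsGT_zero.comp h1)
  -- constants
  set B : ℝ := (∑ i, ρ i) + Real.exp 1 with hBdef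
  have hsumρ : 0 < ∑ i, ρ i := Finset.sum_pos (fun i _ => hρ i) Finset.univ_nonempty
  have hB1 : 1 ≤ B := by
    have := Real.add_one_le_exp (1:ℝ)
    simp only [hBdef]; linarith
  set C : ℝ := ∑ k ∈ Kbar, confC k with hCdef
  have hcleC : ∀ k ∈ Kbar, confC k ≤ C :=
    fun k hk => Finset.single_le_sum (fun k' _ => (confC_pos k').le) hk
  have hC1 : 1 ≤ C := by
    have h := hcleC 0 h0
    have h2 : confC (0 : I → ℕ) = 1 := by
      unfold confC
      simp
    rw [h2] at h
    exact h
  have hBC1 : (1:ℝ) ≤ B * C := by nlinarith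
  have hBCpos : (0:ℝ) < B * C := by nlinarith
  have hlogBC : 0 ≤ Real.log (B * C) := Real.log_nonneg hBC1
  have hei : ∀ i : I, Pi.single i 1 ∈ Kbar.erase 0 := by
    intro i
    refine Finset.mem_erase.mpr ⟨?_, hunit i⟩
    intro h
    have := congrFun h i
    simp at this
  -- basic bounds on xs
  have hxmem : ∀ n, xs (A n) ∈ XsetDef Kbar ρ := fun n => (hmin (A n) (hA1 n)).1
  have hxle : ∀ n, ∀ k ∈ Kbar.erase 0, xs (A n) k ≤ B := fun n k hk =>
    (x_le_sum_rho hρ (hxmem n) hk).trans (le_add_of_nonneg_right (Real.exp_pos 1).le)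
  have hxpos : ∀ n, ∀ k ∈ Kbar.erase 0, 0 < xs (A n) k := by
    intro n k hk
    rw [hprod (A n) (hA1 n) k hk]
    exact mul_pos (div_pos (hA0 n) (confC_pos k)) (Real.exp_pos _)
  -- the key identity
  have hgid : ∀ n, ∀ k ∈ Kbar.erase 0,
      b n * (∑ i, (k i : ℝ) * νs (A n) i) = Real.log (xs (A n) k * confC k) + b n := by
    intro n k hk
    have hx : xs (A n) k * confC k = A n * Real.exp (b n * ∑ i, (k i : ℝ) * νs (A n) i) := by
      have hbn : -Real.log (A n) = b n := rfl
      rw [hprod (A n) (hA1 n) k hk, hbn]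
      field_simp [(confC_pos k).ne']
    rw [hx, Real.log_mul (hA0 n).ne' (Real.exp_pos _).ne', Real.log_exp]
    simp only [hbdef]
    ring
  -- upper bound on weighted sums of ν
  have hub : ∀ n, ∀ k ∈ Kbar.erase 0,
      ∑ i, (k i : ℝ) * νs (A n) i ≤ 1 + Real.log (B * C) / b n := by
    intro n k hk
    have h1 : xs (A n) k * confC k ≤ B * C :=
      mul_le_mul (hxle n k hk) (hcleC k (Finset.mem_of_mem_erase hk)) (confC_pos k).le
        (by linarith)
    have h2 : Real.log (xs (A n) k * confC k) ≤ Real.log (B * C) :=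
      Real.log_le_log (mul_pos (hxpos n k hk) (confC_pos k)) h1
    have h3 : b n * (∑ i, (k i : ℝ) * νs (A n) i) ≤ Real.log (B * C) + b n := by
      rw [hgid n k hk]; linarith
    rw [← mul_le_mul_iff_right₀ (hbpos n)]
    calc b n * (∑ i, (k i : ℝ) * νs (A n) i) ≤ Real.log (B * C) + b n := h3
      _ = b n * (1 + Real.log (B * C) / b n) := by
          field_simp [(hbpos n).ne']
          ring
  -- lower bound on ν
  set S : I → ℝ := fun i => ∑ k ∈ Kbar.erase 0, (k i : ℝ) with hSdef
  have hS1 : ∀ i, 1 ≤ S i := by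
    intro i
    have h := Finset.single_le_sum (f := fun k : I → ℕ => (k i : ℝ))
      (fun k _ => Nat.cast_nonneg _) (hei i)
    simpa using h
  have hρleS : ∀ i, ρ i ≤ S i * (B * C) := by
    intro i
    have h1 : ρ i ≤ B := by
      have := Finset.single_le_sum (fun j _ => (hρ j).le) (Finset.mem_univ i)
      simp only [hBdef]
      linarith [(Real.exp_pos 1).le]
    nlinarith [hS1 i, hρ i]
  set D : I → ℝ := fun i => -Real.log (ρ i / (S i * (B * C))) with hDdef
  have hSBCpos : ∀ i, 0 < S i * (B * C) := fun i => by nlinarith [hS1 i]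
  have hD0 : ∀ i, 0 ≤ D i := by
    intro i
    have h1 : ρ i / (S i * (B * C)) ≤ 1 := (div_le_one (hSBCpos i)).mpr (hρleS i)
    have h2 : Real.log (ρ i / (S i * (B * C))) ≤ 0 := Real.log_nonpos
      (le_of_lt (div_pos (hρ i) (hSBCpos i))) h1
    simp only [hDdef]; linarith
  have hnlb : ∀ n i, -(D i) / b n ≤ νs (A n) i := by
    intro n i
    -- key estimate: every term in the constraint sum is controlled by exp(b ν_i)
    have key : ∀ k ∈ Kbar.erase 0,
        (k i : ℝ) * xs (A n) k ≤ (k i : ℝ) * ((B * C) * Real.exp (b n * νs (A n) i)) := by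
      intro k hk
      rcases Nat.eq_zero_or_pos (k i) with h0i | h1i
      · simp [h0i]
      · refine mul_le_mul_of_nonneg_left ?_ (Nat.cast_nonneg _)
        set k' : I → ℕ := fun j => k j - (Pi.single i 1 : I → ℕ) j with hk'def
        have hk'le : ∀ j, k' j ≤ k j := fun j => Nat.sub_le _ _
        have hk'bar : k' ∈ Kbar := hmono k (Finset.mem_of_mem_erase hk) k' hk'le
        have hdec : ∀ j, (k j : ℝ) = (k' j : ℝ) + ((Pi.single i 1 : I → ℕ) j : ℝ) := by
          intro j
          have hnat : k j = k' j + (Pi.single i 1 : I → ℕ) j := by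
            by_cases hji : j = i
            · subst hji
              simp only [hk'def, Pi.single_eq_same]
              omega
            · simp [hk'def, Pi.single_eq_of_ne hji]
          exact_mod_cast congrArg (fun m : ℕ => (m : ℝ)) hnat
        have hsplit : ∑ j, (k j : ℝ) * νs (A n) j
            = (∑ j, (k' j : ℝ) * νs (A n) j) + νs (A n) i := by
          conv_rhs => rw [← sum_single_mul i (νs (A n))]
          rw [← Finset.sum_add_distrib]
          exact Finset.sum_congr rfl fun j _ => by rw [hdec j]; ring
        have hk'sum : ∑ j, (k' j : ℝ) * νs (A n) j ≤ 1 + Real.log (B * C) / b n := by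
          by_cases hzero : k' = (0 : I → ℕ)
          · rw [hzero]
            have : ∑ j, ((0 : I → ℕ) j : ℝ) * νs (A n) j = 0 := by simp
            rw [this]
            have := div_nonneg hlogBC (hbpos n).le
            linarith
          · exact hub n k' (Finset.mem_erase.mpr ⟨hzero, hk'bar⟩)
        have hsumle : ∑ j, (k j : ℝ) * νs (A n) j
            ≤ νs (A n) i + 1 + Real.log (B * C) / b n := by
          rw [hsplit]; linarith
        have hbn : -Real.log (A n) = b n := rfl
        rw [hprod (A n) (hA1 n) k hk, hbn]
        have hexp : Real.exp (b n * ∑ j, (k j : ℝ) * νs (A n) j)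
            ≤ Real.exp (b n * (νs (A n) i + 1 + Real.log (B * C) / b n)) :=
          Real.exp_le_exp.mpr (mul_le_mul_of_nonneg_left hsumle (hbpos n).le)
        have hexpb : Real.exp (b n) = (A n)⁻¹ := by
          show Real.exp (-Real.log (A n)) = (A n)⁻¹
          rw [Real.exp_neg, Real.exp_log (hA0 n)]
        have heq : A n / confC k * Real.exp (b n * (νs (A n) i + 1 + Real.log (B * C) / b n))
            = (B * C) / confC k * Real.exp (b n * νs (A n) i) := by
          have : b n * (νs (A n) i + 1 + Real.log (B * C) / b n)
              = b n * νs (A n) i + b n + Real.log (B * C) := by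
            field_simp [(hbpos n).ne']
          have hAA : A n * (A n)⁻¹ = 1 := mul_inv_cancel₀ (hA0 n).ne'
          rw [this, Real.exp_add, Real.exp_add, hexpb, Real.exp_log hBCpos]
          calc A n / confC k * (Real.exp (b n * νs (A n) i) * (A n)⁻¹ * (B * C))
              = (A n * (A n)⁻¹) * ((B * C) / confC k * Real.exp (b n * νs (A n) i)) := by
                ring
            _ = (B * C) / confC k * Real.exp (b n * νs (A n) i) := by rw [hAA, one_mul]
        calc A n / confC k * Real.exp (b n * ∑ j, (k j : ℝ) * νs (A n) j)
            ≤ A n / confC k * Real.exp (b n * (νs (A n) i + 1 + Real.log (B * C) / b n)) :=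
              mul_le_mul_of_nonneg_left hexp (div_nonneg (hA0 n).le (confC_pos k).le)
          _ = (B * C) / confC k * Real.exp (b n * νs (A n) i) := heq
          _ ≤ (B * C) * Real.exp (b n * νs (A n) i) := by
              apply mul_le_mul_of_nonneg_right _ (Real.exp_pos _).le
              exact div_le_self hBCpos.le (one_le_confC k)
    have hrho : ρ i ≤ S i * ((B * C) * Real.exp (b n * νs (A n) i)) := by
      rw [← (hxmem n).2 i]
      calc ∑ k ∈ Kbar.erase 0, (k i : ℝ) * xs (A n) k
          ≤ ∑ k ∈ Kbar.erase 0, (k i : ℝ) * ((B * C) * Real.exp (b n * νs (A n) i)) :=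
            Finset.sum_le_sum key
        _ = S i * ((B * C) * Real.exp (b n * νs (A n) i)) := by
            rw [hSdef]; rw [← Finset.sum_mul]
    have hquot : ρ i / (S i * (B * C)) ≤ Real.exp (b n * νs (A n) i) := by
      rw [div_le_iff₀ (hSBCpos i)]
      calc ρ i ≤ S i * ((B * C) * Real.exp (b n * νs (A n) i)) := hrho
        _ = Real.exp (b n * νs (A n) i) * (S i * (B * C)) := by ring
    have hlog : -(D i) ≤ b n * νs (A n) i := by
      have h := Real.log_le_log (div_pos (hρ i) (hSBCpos i)) hquot
      rw [Real.log_exp] at h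
      simp only [hDdef, neg_neg]
      exact h
    rw [div_le_iff₀ (hbpos n)]
    nlinarith [hlog]
  -- compactness extraction
  set xt : ℕ → (I → ℕ) → ℝ := fun n k => if k ∈ Kbar.erase 0 then xs (A n) k else 0 with hxtdef
  have hxtmem : ∀ n, xt n ∈ Set.Icc (0 : (I → ℕ) → ℝ) (fun _ => B) := by
    intro n
    rw [Set.mem_Icc]
    constructor <;> intro k <;> simp only [hxtdef, Pi.zero_apply]
    · by_cases hk : k ∈ Kbar.erase 0
      · rw [if_pos hk]; exact ((hxmem n).1 k hk)
      · rw [if_neg hk]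
    · by_cases hk : k ∈ Kbar.erase 0
      · rw [if_pos hk]; exact hxle n k hk
      · rw [if_neg hk]; linarith
  have hνub : ∀ n i, νs (A n) i ≤ 1 + Real.log (B * C) := by
    intro n i
    have h := hub n (Pi.single i 1) (hei i)
    rw [sum_single_mul] at h
    have : Real.log (B * C) / b n ≤ Real.log (B * C) := div_le_self hlogBC (hb1 n)
    linarith
  have hνlb : ∀ n i, -(D i) ≤ νs (A n) i := by
    intro n i
    have h := hnlb n i
    have h2 : -(D i) ≤ -(D i) / b n := by
      rw [le_div_iff₀ (hbpos n)]
      nlinarith [hD0 i, hb1 n]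
    exact le_trans h2 h
  have hνmem : ∀ n, νs (A n) ∈ Set.Icc (fun i => -(D i)) (fun _ : I => 1 + Real.log (B * C)) := by
    intro n
    rw [Set.mem_Icc]
    exact ⟨fun i => hνlb n i, fun i => hνub n i⟩
  have hcomp : IsCompact ((Set.Icc (0 : (I → ℕ) → ℝ) (fun _ => B)) ×ˢ
      (Set.Icc (fun i => -(D i)) (fun _ : I => 1 + Real.log (B * C)))) :=
    isCompact_Icc.prod isCompact_Icc
  obtain ⟨q, hq, φ, hφ, hconv⟩ := hcomp.tendsto_subseq
    (x := fun n => (xt n, νs (A n))) (fun n => Set.mk_mem_prod (hxtmem n) (hνmem n))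
  set xb := q.1 with hxbdef
  set η := q.2 with hηdef
  have hxconv : Filter.Tendsto (fun n => xt (φ n)) Filter.atTop (nhds xb) :=
    (continuous_fst.tendsto q).comp hconv
  have hνconv : Filter.Tendsto (fun n => νs (A (φ n))) Filter.atTop (nhds η) :=
    (continuous_snd.tendsto q).comp hconv
  have hxk : ∀ k, Filter.Tendsto (fun n => xt (φ n) k) Filter.atTop (nhds (xb k)) :=
    tendsto_pi_nhds.mp hxconv
  have hνi : ∀ i, Filter.Tendsto (fun n => νs (A (φ n)) i) Filter.atTop (nhds (η i)) :=
    tendsto_pi_nhds.mp hνconv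
  have hxteq : ∀ n, ∀ k ∈ Kbar.erase 0, xt n k = xs (A n) k := by
    intro n k hk
    simp only [hxtdef]
    rw [if_pos hk]
  have hxsk : ∀ k ∈ Kbar.erase 0,
      Filter.Tendsto (fun n => xs (A (φ n)) k) Filter.atTop (nhds (xb k)) := by
    intro k hk
    exact (hxk k).congr (fun n => hxteq (φ n) k hk)
  have hbφ : Filter.Tendsto (fun n => b (φ n)) Filter.atTop Filter.atTop :=
    hbtop.comp hφ.tendsto_atTop
  have hbinv0 : Filter.Tendsto (fun n => (b (φ n))⁻¹) Filter.atTop (nhds 0) :=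
    tendsto_inv_atTop_zero.comp hbφ
  -- xb is feasible
  have hxbX : xb ∈ XsetDef Kbar ρ := by
    constructor
    · intro k hk
      have := (Set.mem_Icc.mp (Set.mem_prod.mp hq).1).1 k
      simpa using this
    · intro i
      have h1 : Filter.Tendsto (fun n => ∑ k ∈ Kbar.erase 0, (k i : ℝ) * xt (φ n) k)
          Filter.atTop (nhds (∑ k ∈ Kbar.erase 0, (k i : ℝ) * xb k)) :=
        tendsto_finset_sum _ fun k _ => (hxk k).const_mul _
      have h2 : ∀ n, ∑ k ∈ Kbar.erase 0, (k i : ℝ) * xt (φ n) k = ρ i := by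
        intro n
        rw [Finset.sum_congr rfl fun k hk => by rw [hxteq (φ n) k hk]]
        exact (hxmem (φ n)).2 i
      have h3 : Filter.Tendsto (fun n : ℕ => ρ i) Filter.atTop
          (nhds (∑ k ∈ Kbar.erase 0, (k i : ℝ) * xb k)) := by
        refine h1.congr fun n => h2 n
      exact tendsto_nhds_unique h3 tendsto_const_nhds
  -- distance convergence for x
  have hdistx : Filter.Tendsto (fun n => Real.sqrt (∑ k ∈ Kbar.erase 0, (xs (A (φ n)) k - xb k) ^ 2))
      Filter.atTop (nhds 0) := by
    have h1 : Filter.Tendsto (fun n => ∑ k ∈ Kbar.erase 0, (xs (A (φ n)) k - xb k) ^ 2)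
        Filter.atTop (nhds 0) := by
      have h2 : Filter.Tendsto (fun n => ∑ k ∈ Kbar.erase 0, (xs (A (φ n)) k - xb k) ^ 2)
          Filter.atTop (nhds (∑ k ∈ Kbar.erase 0, (xb k - xb k) ^ 2)) :=
        tendsto_finset_sum _ fun k hk => (((hxsk k hk).sub tendsto_const_nhds).pow 2)
      simpa using h2
    have := (Real.continuous_sqrt.tendsto 0).comp h1
    simpa [Function.comp_def] using this
  -- distance convergence for ν
  have hdistν : Filter.Tendsto (fun n => Real.sqrt (∑ i, (νs (A (φ n)) i - η i) ^ 2))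
      Filter.atTop (nhds 0) := by
    have h1 : Filter.Tendsto (fun n => ∑ i, (νs (A (φ n)) i - η i) ^ 2)
        Filter.atTop (nhds 0) := by
      have h2 : Filter.Tendsto (fun n => ∑ i, (νs (A (φ n)) i - η i) ^ 2)
          Filter.atTop (nhds (∑ i, (η i - η i) ^ 2)) :=
        tendsto_finset_sum _ fun i _ => (((hνi i).sub tendsto_const_nhds).pow 2)
      simpa using h2
    have := (Real.continuous_sqrt.tendsto 0).comp h1
    simpa [Function.comp_def] using this
  -- xb is optimal
  have hxbstar : xb ∈ XstarDef Kbar ρ := by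
    refine ⟨hxbX, ?_⟩
    intro y hy
    set M : ℝ := (Kbar.erase 0).card * (1 + B) with hMdef
    set Fy : ℝ := ∑ k ∈ Kbar.erase 0, (y k * Real.log (y k * confC k) - y k) with hFydef
    have hFlb : ∀ n, -M ≤ ∑ k ∈ Kbar.erase 0,
        (xs (A n) k * Real.log (xs (A n) k * confC k) - xs (A n) k) := by
      intro n
      have hterm : ∀ k ∈ Kbar.erase 0,
          -(1 + B) ≤ xs (A n) k * Real.log (xs (A n) k * confC k) - xs (A n) k := by
        intro k hk
        have h1 := neg_one_le_mul_log ((hxmem n).1 k hk) (one_le_confC k)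
        have h2 := hxle n k hk
        linarith
      have h := Finset.card_nsmul_le_sum (Kbar.erase 0)
        (fun k => xs (A n) k * Real.log (xs (A n) k * confC k) - xs (A n) k) (-(1+B)) hterm
      rw [nsmul_eq_mul] at h
      simp only [hMdef]
      nlinarith [h]
    have hsplitx : ∀ n, Lfun Kbar (A n) (xs (A n)) = (∑ k ∈ Kbar.erase 0, xs (A n) k)
        + (∑ k ∈ Kbar.erase 0, (xs (A n) k * Real.log (xs (A n) k * confC k) - xs (A n) k)) / b n :=
      fun n => Lfun_split Kbar (hA1 n) (xs (A n)) (hxmem n).1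
    have hsplity : ∀ n, Lfun Kbar (A n) y = (∑ k ∈ Kbar.erase 0, y k) + Fy / b n :=
      fun n => Lfun_split Kbar (hA1 n) y hy.1
    have hn : ∀ n, ∑ k ∈ Kbar.erase 0, xs (A n) k
        ≤ (∑ k ∈ Kbar.erase 0, y k) + (Fy + M) * (b n)⁻¹ := by
      intro n
      have h := (hmin (A n) (hA1 n)).2 y hy
      rw [hsplitx n, hsplity n] at h
      have hbinv : (0:ℝ) < (b n)⁻¹ := inv_pos.mpr (hbpos n)
      set Fx : ℝ := ∑ k ∈ Kbar.erase 0,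
        (xs (A n) k * Real.log (xs (A n) k * confC k) - xs (A n) k) with hFxdef
      have hFxlb : -M ≤ Fx := hFlb n
      have h2 : (Fy - Fx) * (b n)⁻¹ ≤ (Fy + M) * (b n)⁻¹ :=
        mul_le_mul_of_nonneg_right (by linarith) hbinv.le
      rw [div_eq_mul_inv, div_eq_mul_inv] at h
      nlinarith [h, h2]
    have hlhs : Filter.Tendsto (fun n => ∑ k ∈ Kbar.erase 0, xs (A (φ n)) k) Filter.atTop
        (nhds (∑ k ∈ Kbar.erase 0, xb k)) :=
      tendsto_finset_sum _ fun k hk => hxsk k hk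
    have hrhs : Filter.Tendsto
        (fun n => (∑ k ∈ Kbar.erase 0, y k) + (Fy + M) * (b (φ n))⁻¹) Filter.atTop
        (nhds ((∑ k ∈ Kbar.erase 0, y k) + 0)) := by
      apply Filter.Tendsto.const_add
      have := hbinv0.const_mul (Fy + M)
      simpa using this
    rw [add_zero] at hrhs
    exact le_of_tendsto_of_tendsto' hlhs hrhs fun n => hn (φ n)
  -- η is dual optimal
  have hη0 : ∀ i, 0 ≤ η i := by
    intro i
    have hf : Filter.Tendsto (fun n => -(D i) * (b (φ n))⁻¹) Filter.atTop (nhds 0) := by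
      have := hbinv0.const_mul (-(D i))
      simpa using this
    refine le_of_tendsto_of_tendsto' hf (hνi i) fun n => ?_
    have := hnlb (φ n) i
    rw [div_eq_mul_inv] at this
    exact this
  have hηle : ∀ k ∈ Kbar.erase 0, ∑ i, (k i : ℝ) * η i ≤ 1 := by
    intro k hk
    have hf : Filter.Tendsto (fun n => ∑ i, (k i : ℝ) * νs (A (φ n)) i) Filter.atTop
        (nhds (∑ i, (k i : ℝ) * η i)) :=
      tendsto_finset_sum _ fun i _ => (hνi i).const_mul _
    have hg : Filter.Tendsto (fun n => 1 + Real.log (B * C) * (b (φ n))⁻¹) Filter.atTop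
        (nhds (1 + 0)) := by
      apply Filter.Tendsto.const_add
      have := hbinv0.const_mul (Real.log (B * C))
      simpa using this
    rw [add_zero] at hg
    refine le_of_tendsto_of_tendsto' hf hg fun n => ?_
    have := hub (φ n) k hk
    rw [div_eq_mul_inv] at this
    exact this
  have hcs : ∀ k ∈ Kbar.erase 0, ∑ i, (k i : ℝ) * η i < 1 → xb k = 0 := by
    intro k hk hlt
    set δ : ℝ := 1 - ∑ i, (k i : ℝ) * η i with hδdef
    have hδpos : 0 < δ := by simp only [hδdef]; linarith
    have hf : Filter.Tendsto (fun n => ∑ i, (k i : ℝ) * νs (A (φ n)) i) Filter.atTop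
        (nhds (∑ i, (k i : ℝ) * η i)) :=
      tendsto_finset_sum _ fun i _ => (hνi i).const_mul _
    have hev : ∀ᶠ n in Filter.atTop, ∑ i, (k i : ℝ) * νs (A (φ n)) i < 1 - δ/2 :=
      hf.eventually_lt_const (by simp only [hδdef]; linarith)
    have hsmall : ∀ᶠ n in Filter.atTop,
        xs (A (φ n)) k ≤ Real.exp (-(b (φ n) * (δ/2))) := by
      filter_upwards [hev] with n hevn
      have hbn : -Real.log (A (φ n)) = b (φ n) := rfl
      rw [hprod (A (φ n)) (hA1 (φ n)) k hk, hbn]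
      have hexp : Real.exp (b (φ n) * ∑ i, (k i : ℝ) * νs (A (φ n)) i)
          ≤ Real.exp (b (φ n) * (1 - δ/2)) :=
        Real.exp_le_exp.mpr (mul_le_mul_of_nonneg_left hevn.le (hbpos (φ n)).le)
      have hexpb : Real.exp (b (φ n)) = (A (φ n))⁻¹ := by
        show Real.exp (-Real.log (A (φ n))) = (A (φ n))⁻¹
        rw [Real.exp_neg, Real.exp_log (hA0 (φ n))]
      have heq : A (φ n) * Real.exp (b (φ n) * (1 - δ/2)) = Real.exp (-(b (φ n) * (δ/2))) := by
        have h1 : b (φ n) * (1 - δ/2) = b (φ n) + (-(b (φ n) * (δ/2))) := by ring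
        rw [h1, Real.exp_add, hexpb, ← mul_assoc, mul_inv_cancel₀ (hA0 (φ n)).ne', one_mul]
      calc A (φ n) / confC k * Real.exp (b (φ n) * ∑ i, (k i : ℝ) * νs (A (φ n)) i)
          ≤ A (φ n) / confC k * Real.exp (b (φ n) * (1 - δ/2)) :=
            mul_le_mul_of_nonneg_left hexp (div_nonneg (hA0 (φ n)).le (confC_pos k).le)
        _ ≤ A (φ n) * Real.exp (b (φ n) * (1 - δ/2)) := by
            apply mul_le_mul_of_nonneg_right _ (Real.exp_pos _).le
            exact div_le_self (hA0 (φ n)).le (one_le_confC k)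
        _ = Real.exp (-(b (φ n) * (δ/2))) := heq
    have hzero : Filter.Tendsto (fun n => Real.exp (-(b (φ n) * (δ/2)))) Filter.atTop (nhds 0) := by
      apply Real.tendsto_exp_atBot.comp
      apply tendsto_neg_atTop_atBot.comp
      exact hbφ.atTop_mul_const (by linarith)
    have hxk0 : Filter.Tendsto (fun n => xs (A (φ n)) k) Filter.atTop (nhds 0) := by
      apply squeeze_zero' (Filter.Eventually.of_forall fun n => ((hxmem (φ n)).1 k hk)) hsmall hzero
    exact tendsto_nhds_unique (hxsk k hk) hxk0
  have hηH : η ∈ HstarDef Kbar ρ := ⟨hη0, hηle, xb, hxbX, hcs⟩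
  exact ⟨φ, hφ, xb, hxbstar, η, hηH, hdistx, hdistν⟩

end mainseq

/-- Theorem: convergence of `x^{*,a}` to `X*` and `ν^{*,a}` to `H*` as `a → 0+`,
in Euclidean distance. -/
theorem minimizer_tendsto_opt
    {I : Type*} [Fintype I] [DecidableEq I] [Nonempty I]
    (Kbar : Finset (I → ℕ))
    (h0 : (0 : I → ℕ) ∈ Kbar)
    (hunit : ∀ i : I, Pi.single i 1 ∈ Kbar)
    (hmono : ∀ k ∈ Kbar, ∀ k' : I → ℕ, (∀ i, k' i ≤ k i) → k' ∈ Kbar)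
    (ρ : I → ℝ) (hρ : ∀ i, 0 < ρ i)
    (xs : ℝ → (I → ℕ) → ℝ) (νs : ℝ → I → ℝ)
    (hmin : ∀ a ∈ Set.Ioo (0 : ℝ) 1, xs a ∈ XsetDef Kbar ρ ∧
      ∀ y ∈ XsetDef Kbar ρ, Lfun Kbar a (xs a) ≤ Lfun Kbar a y)
    (hprod : ∀ a ∈ Set.Ioo (0 : ℝ) 1, ∀ k ∈ Kbar.erase 0,
      xs a k = (a / confC k) * Real.exp ((-Real.log a) * ∑ i, (k i : ℝ) * νs a i)) :
    Tendsto (fun a : ℝ =>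
        sInf {d : ℝ | ∃ y ∈ XstarDef Kbar ρ,
          d = Real.sqrt (∑ k ∈ Kbar.erase 0, (xs a k - y k) ^ 2)})
      (nhdsWithin 0 (Set.Ioi 0)) (nhds 0) ∧
    Tendsto (fun a : ℝ =>
        sInf {d : ℝ | ∃ η ∈ HstarDef Kbar ρ,
          d = Real.sqrt (∑ i, (νs a i - η i) ^ 2)})
      (nhdsWithin 0 (Set.Ioi 0)) (nhds 0) := by
  have hnonneg1 : ∀ a : ℝ, 0 ≤ sInf {d : ℝ | ∃ y ∈ XstarDef Kbar ρ,
      d = Real.sqrt (∑ k ∈ Kbar.erase 0, (xs a k - y k) ^ 2)} := by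
    intro a
    apply Real.sInf_nonneg
    rintro d ⟨y, _, rfl⟩
    exact Real.sqrt_nonneg _
  have hnonneg2 : ∀ a : ℝ, 0 ≤ sInf {d : ℝ | ∃ η ∈ HstarDef Kbar ρ,
      d = Real.sqrt (∑ i, (νs a i - η i) ^ 2)} := by
    intro a
    apply Real.sInf_nonneg
    rintro d ⟨η, _, rfl⟩
    exact Real.sqrt_nonneg _
  constructor
  · rw [Metric.tendsto_nhds]
    intro ε hε
    by_contra hcon
    rw [Filter.not_eventually] at hcon
    obtain ⟨u, hu_tendsto, hu⟩ := Filter.exists_seq_forall_of_frequently hcon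
    have hupos : ∀ᶠ n in atTop, 0 < u n := by
      have : ∀ᶠ x : ℝ in nhdsWithin 0 (Set.Ioi 0), 0 < x :=
        eventually_mem_nhdsWithin
      exact hu_tendsto.eventually this
    have hulim : Tendsto u atTop (nhds 0) := hu_tendsto.mono_right nhdsWithin_le_nhds
    have husmall : ∀ᶠ n in atTop, u n < Real.exp (-1) :=
      hulim.eventually_lt_const (Real.exp_pos (-1))
    obtain ⟨N, hN⟩ := Filter.eventually_atTop.mp (hupos.and husmall)
    set A : ℕ → ℝ := fun m => u (m + N) with hAdef
    have hA0 : ∀ m, 0 < A m := fun m => (hN (m + N) (Nat.le_add_left N m)).1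
    have hAe : ∀ m, A m ≤ Real.exp (-1) := fun m => (hN (m + N) (Nat.le_add_left N m)).2.le
    have hAlim : Tendsto A atTop (nhds 0) := hulim.comp (tendsto_add_atTop_nat N)
    obtain ⟨φ, hφ, xb, hxb, η, hη, hdx, hdν⟩ :=
      main_seq Kbar h0 hunit hmono ρ hρ xs νs hmin hprod A hA0 hAe hAlim
    have hbdd : ∀ a : ℝ, BddBelow {d : ℝ | ∃ y ∈ XstarDef Kbar ρ,
        d = Real.sqrt (∑ k ∈ Kbar.erase 0, (xs a k - y k) ^ 2)} := by
      intro a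
      refine ⟨0, ?_⟩
      rintro d ⟨y, _, rfl⟩
      exact Real.sqrt_nonneg _
    have hup : ∀ m, sInf {d : ℝ | ∃ y ∈ XstarDef Kbar ρ,
        d = Real.sqrt (∑ k ∈ Kbar.erase 0, (xs (A (φ m)) k - y k) ^ 2)}
        ≤ Real.sqrt (∑ k ∈ Kbar.erase 0, (xs (A (φ m)) k - xb k) ^ 2) :=
      fun m => csInf_le (hbdd _) ⟨xb, hxb, rfl⟩
    have hg : Tendsto (fun m => sInf {d : ℝ | ∃ y ∈ XstarDef Kbar ρ,
        d = Real.sqrt (∑ k ∈ Kbar.erase 0, (xs (A (φ m)) k - y k) ^ 2)}) atTop (nhds 0) :=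
      squeeze_zero (fun m => hnonneg1 _) hup hdx
    have hle : ∀ m, ε ≤ sInf {d : ℝ | ∃ y ∈ XstarDef Kbar ρ,
        d = Real.sqrt (∑ k ∈ Kbar.erase 0, (xs (A (φ m)) k - y k) ^ 2)} := by
      intro m
      have h := hu (φ m + N)
      rw [Real.dist_eq, sub_zero, not_lt] at h
      calc ε ≤ |sInf {d : ℝ | ∃ y ∈ XstarDef Kbar ρ,
          d = Real.sqrt (∑ k ∈ Kbar.erase 0, (xs (u (φ m + N)) k - y k) ^ 2)}| := h
        _ = _ := abs_of_nonneg (hnonneg1 _)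
    have : ε ≤ 0 := ge_of_tendsto hg (Filter.Eventually.of_forall hle)
    linarith
  · rw [Metric.tendsto_nhds]
    intro ε hε
    by_contra hcon
    rw [Filter.not_eventually] at hcon
    obtain ⟨u, hu_tendsto, hu⟩ := Filter.exists_seq_forall_of_frequently hcon
    have hupos : ∀ᶠ n in atTop, 0 < u n := by
      have : ∀ᶠ x : ℝ in nhdsWithin 0 (Set.Ioi 0), 0 < x :=
        eventually_mem_nhdsWithin
      exact hu_tendsto.eventually this
    have hulim : Tendsto u atTop (nhds 0) := hu_tendsto.mono_right nhdsWithin_le_nhds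
    have husmall : ∀ᶠ n in atTop, u n < Real.exp (-1) :=
      hulim.eventually_lt_const (Real.exp_pos (-1))
    obtain ⟨N, hN⟩ := Filter.eventually_atTop.mp (hupos.and husmall)
    set A : ℕ → ℝ := fun m => u (m + N) with hAdef
    have hA0 : ∀ m, 0 < A m := fun m => (hN (m + N) (Nat.le_add_left N m)).1
    have hAe : ∀ m, A m ≤ Real.exp (-1) := fun m => (hN (m + N) (Nat.le_add_left N m)).2.le
    have hAlim : Tendsto A atTop (nhds 0) := hulim.comp (tendsto_add_atTop_nat N)
    obtain ⟨φ, hφ, xb, hxb, η, hη, hdx, hdν⟩ :=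
      main_seq Kbar h0 hunit hmono ρ hρ xs νs hmin hprod A hA0 hAe hAlim
    have hbdd : ∀ a : ℝ, BddBelow {d : ℝ | ∃ η ∈ HstarDef Kbar ρ,
        d = Real.sqrt (∑ i, (νs a i - η i) ^ 2)} := by
      intro a
      refine ⟨0, ?_⟩
      rintro d ⟨η', _, rfl⟩
      exact Real.sqrt_nonneg _
    have hup : ∀ m, sInf {d : ℝ | ∃ η' ∈ HstarDef Kbar ρ,
        d = Real.sqrt (∑ i, (νs (A (φ m)) i - η' i) ^ 2)}
        ≤ Real.sqrt (∑ i, (νs (A (φ m)) i - η i) ^ 2) :=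
      fun m => csInf_le (hbdd _) ⟨η, hη, rfl⟩
    have hg : Tendsto (fun m => sInf {d : ℝ | ∃ η' ∈ HstarDef Kbar ρ,
        d = Real.sqrt (∑ i, (νs (A (φ m)) i - η' i) ^ 2)}) atTop (nhds 0) :=
      squeeze_zero (fun m => hnonneg2 _) hup hdν
    have hle : ∀ m, ε ≤ sInf {d : ℝ | ∃ η' ∈ HstarDef Kbar ρ,
        d = Real.sqrt (∑ i, (νs (A (φ m)) i - η' i) ^ 2)} := by
      intro m
      have h := hu (φ m + N)
      rw [Real.dist_eq, sub_zero, not_lt] at h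
      calc ε ≤ |sInf {d : ℝ | ∃ η' ∈ HstarDef Kbar ρ,
          d = Real.sqrt (∑ i, (νs (u (φ m + N)) i - η' i) ^ 2)}| := h
        _ = _ := abs_of_nonneg (hnonneg2 _)
    have : ε ≤ 0 := ge_of_tendsto hg (Filter.Eventually.of_forall hle)
    linarith
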